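/- Let k ≥ 1 and n ≥ k+1 be integers and t ∈ [0,1]. In the random clique complex model, let N̂_k(t) be the number of (k+1)-element subsets σ of [n] such that σ is not a clique of G(n,t) but σ is a maximal clique of G(n,s) for some s ∈ (t,1]. Then E[N̂_k(t)] ≤ C(n,k+1) · C(k+1,2) · ∫_t^1 s^{C(k+1,2) − 1} (1 − s^{k+1})^{n−k−1} ds, where C(a,b) denotes the binomial coefficient a choose b. -/

import Mathlib

open MeasureTheory

/-- Index type: unordered pairs of distinct elements of `Fin n`. -/
abbrev EdgeIdx (n : ℕ) := {e : Sym2 (Fin n) // ¬ e.IsDiag}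

noncomputable instance (n : ℕ) : Fintype (EdgeIdx n) := Fintype.ofFinite _

/-- Uniform probability measure on `[0,1]`. -/
noncomputable def unif : Measure ℝ := volume.restrict (Set.Icc 0 1)

/-- The product measure: i.i.d. Uniform[0,1] edge weights. -/
noncomputable def Pn (n : ℕ) : Measure (EdgeIdx n → ℝ) := Measure.pi fun _ => unif

/-- The weight of the pair `{i,j}` (defined to be `0` if `i = j`, a junk value never used). -/
noncomputable def eV {n : ℕ} (ω : EdgeIdx n → ℝ) (i j : Fin n) : ℝ :=
  if h : i = j then 0 else ω ⟨s(i, j), by simp [Sym2.mk_isDiag_iff, h]⟩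

/-- `σ` is a clique of `G(n,t)`: every pair of distinct elements of `σ` is an edge. -/
def IsClique {n : ℕ} (ω : EdgeIdx n → ℝ) (t : ℝ) (σ : Finset (Fin n)) : Prop :=
  ∀ i ∈ σ, ∀ j ∈ σ, i ≠ j → eV ω i j ≤ t

/-- `σ` is a maximal `(k+1)`-element clique of `G(n,t)`. -/
def IsMaxClique {n : ℕ} (k : ℕ) (ω : EdgeIdx n → ℝ) (t : ℝ) (σ : Finset (Fin n)) : Prop :=
  σ.card = k + 1 ∧ IsClique ω t σ ∧ ∀ p, p ∉ σ → ∃ i ∈ σ, t < eV ω p i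

/-- `N_k(t)`: the number of maximal `(k+1)`-element cliques of `G(n,t)`. -/
noncomputable def Nk {n : ℕ} (k : ℕ) (t : ℝ) (ω : EdgeIdx n → ℝ) : ℕ :=
  Nat.card {σ : Finset (Fin n) // IsMaxClique k ω t σ}

/-- `N*_k(t)`: the number of `(k+1)`-element subsets that are maximal cliques
of `G(n,s)` for some `s ∈ [t,1]`. -/
noncomputable def NkStar {n : ℕ} (k : ℕ) (t : ℝ) (ω : EdgeIdx n → ℝ) : ℕ :=
  Nat.card {σ : Finset (Fin n) // ∃ s, t ≤ s ∧ s ≤ 1 ∧ IsMaxClique k ω s σ}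

/-- The critical window time `t_c(k,n)`. -/
noncomputable def tc (k : ℕ) (c : ℝ) (n : ℕ) : ℝ :=
  ((((k : ℝ) / 2 + 1) * Real.log n + ((k : ℝ) / 2) * Real.log (Real.log n) + c) / n)
    ^ ((1 : ℝ) / (k + 1))

/-- `μ(k,c) = ((k/2+1)^(k/2)/(k+1)!) e^{-c}`. -/
noncomputable def muk (k : ℕ) (c : ℝ) : ℝ :=
  (((k : ℝ) / 2 + 1) ^ ((k : ℝ) / 2) / (Nat.factorial (k + 1))) * Real.exp (-c)

/-- `N̂_k(t)`: the number of `(k+1)`-element subsets that are not cliques of `G(n,t)`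
but are maximal cliques of `G(n,s)` for some `s ∈ (t,1]`. -/
noncomputable def NkHat {n : ℕ} (k : ℕ) (t : ℝ) (ω : EdgeIdx n → ℝ) : ℕ :=
  Nat.card {σ : Finset (Fin n) // σ.card = k + 1 ∧ ¬ IsClique ω t σ ∧
    ∃ s, t < s ∧ s ≤ 1 ∧ IsMaxClique k ω s σ}
section Aux

open Set

instance : IsProbabilityMeasure unif :=
  ⟨by simp [unif, Real.volume_Icc]⟩

instance (n : ℕ) : IsProbabilityMeasure (Pn n) := by
  unfold Pn; infer_instance

variable {n : ℕ}

/-- The edge index of two distinct vertices. -/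
def eI {n : ℕ} (i j : Fin n) (h : i ≠ j) : EdgeIdx n :=
  ⟨s(i, j), by simp [Sym2.mk_isDiag_iff, h]⟩

lemma eV_eq {n : ℕ} (ω : EdgeIdx n → ℝ) {i j : Fin n} (h : i ≠ j) :
    eV ω i j = ω (eI i j h) := by
  rw [eV, dif_neg h]; rfl

/-- Both endpoints belong to `σ`. -/
def InS (σ : Finset (Fin n)) (E : EdgeIdx n) : Prop := ∀ v ∈ E.1, v ∈ σ

/-- `E` is an edge from `p` to `σ`. -/
def Tp (σ : Finset (Fin n)) (p : Fin n) (E : EdgeIdx n) : Prop := ∃ i ∈ σ, E.1 = s(p, i)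

open Classical in
/-- The set of edges inside `σ`. -/
noncomputable def sE (σ : Finset (Fin n)) : Finset (EdgeIdx n) :=
  Finset.univ.filter (InS σ)

lemma mem_sE {σ : Finset (Fin n)} {E : EdgeIdx n} : E ∈ sE σ ↔ InS σ E := by
  simp [sE]

lemma isClique_iff {ω : EdgeIdx n → ℝ} {c : ℝ} {σ : Finset (Fin n)} :
    IsClique ω c σ ↔ ∀ E ∈ sE σ, ω E ≤ c := by
  constructor
  · intro h E hE
    obtain ⟨i, j, hrep⟩ : ∃ i j, E.1 = s(i, j) := E.1.inductionOn fun i j => ⟨i, j, rfl⟩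
    have hij : i ≠ j := by
      intro hij
      exact E.2 (by rw [hrep, hij]; exact Sym2.isDiag_iff_proj_eq.2 rfl)
    have hins := mem_sE.1 hE
    have hi : i ∈ σ := hins i (by rw [hrep]; exact Sym2.mem_mk_left i j)
    have hj : j ∈ σ := hins j (by rw [hrep]; exact Sym2.mem_mk_right i j)
    have hEe : E = eI i j hij := Subtype.ext hrep
    rw [hEe, ← eV_eq ω hij]
    exact h i hi j hj hij
  · intro h i hi j hj hij
    rw [eV_eq ω hij]
    refine h _ (mem_sE.2 fun v hv => ?_)
    rcases Sym2.mem_iff.1 hv with rfl | rfl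
    exacts [hi, hj]

lemma card_sE (σ : Finset (Fin n)) : (sE σ).card = Nat.choose σ.card 2 := by
  classical
  have h1 : (sE σ).card = (σ.sym2.filter fun z => ¬ z.IsDiag).card := by
    apply Finset.card_bij (fun E _ => E.1)
    · intro E hE
      rw [Finset.mem_filter]
      exact ⟨Finset.mem_sym2_iff.2 (mem_sE.1 hE), E.2⟩
    · intro a _ b _ hab; exact Subtype.ext hab
    · intro z hz
      rw [Finset.mem_filter] at hz
      exact ⟨⟨z, hz.2⟩, mem_sE.2 (Finset.mem_sym2_iff.1 hz.1), rfl⟩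
  have h2 : (σ.sym2.filter fun z => z.IsDiag).card = σ.card := by
    have he : σ.sym2.filter (fun z => z.IsDiag) = σ.image Sym2.diag := by
      ext z
      simp only [Finset.mem_filter, Finset.mem_image]
      constructor
      · rintro ⟨hz, hd⟩
        obtain ⟨a, rfl⟩ := (show z ∈ Set.range Sym2.diag by rw [Sym2.range_diag]; exact hd)
        exact ⟨a, Finset.diag_mem_sym2_iff.1 hz, rfl⟩
      · rintro ⟨a, ha, rfl⟩
        exact ⟨Finset.diag_mem_sym2_iff.2 ha, Sym2.diag_isDiag a⟩
    rw [he, Finset.card_image_of_injective _ Sym2.diag_injective]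
  have h3 := Finset.card_filter_add_card_filter_not
    (s := σ.sym2) (p := fun z => z.IsDiag)
  rw [Finset.card_sym2] at h3
  have h4 : Nat.choose (σ.card + 1) 2 = σ.card + Nat.choose σ.card 2 := by
    rw [Nat.choose_succ_succ]
    simp [Nat.choose_one_right]
  omega

end Aux
section Indep

open Set

lemma mble_box {ι : Type*} [Countable ι] (P : ι → Prop) (c : ℝ) :
    MeasurableSet {y : ι → ℝ | ∀ i, P i → y i ≤ c} := by
  rw [Set.setOf_forall]
  refine MeasurableSet.iInter fun i => ?_
  by_cases hP : P i
  · simp only [eq_true hP, true_implies]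
    exact measurableSet_le (measurable_pi_apply i) measurable_const
  · simp [hP]

lemma unif_Iic {c : ℝ} (h0 : 0 ≤ c) (h1 : c ≤ 1) : unif (Set.Iic c) = ENNReal.ofReal c := by
  rw [unif, Measure.restrict_apply measurableSet_Iic]
  have : Set.Iic c ∩ Set.Icc 0 1 = Set.Icc 0 c := by
    ext x
    simp only [Set.mem_inter_iff, Set.mem_Iic, Set.mem_Icc]
    constructor
    · rintro ⟨hx, hx0, _⟩; exact ⟨hx0, hx⟩
    · rintro ⟨hx0, hx⟩; exact ⟨hx, hx0, hx.trans h1⟩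
  rw [this, Real.volume_Icc, sub_zero]

lemma pi_box {ι : Type*} [Fintype ι] (P : ι → Prop) [DecidablePred P] (c : ℝ) :
    Measure.pi (fun _ : ι => unif) {y : ι → ℝ | ∀ i, P i → y i ≤ c} =
      unif (Set.Iic c) ^ (Finset.univ.filter P).card := by
  have h : {y : ι → ℝ | ∀ i, P i → y i ≤ c} =
      Set.pi Set.univ (fun i => if P i then Set.Iic c else Set.univ) := by
    ext y
    simp only [Set.mem_setOf_eq, Set.mem_pi, Set.mem_univ, forall_true_left]
    constructor
    · intro h i
      split_ifs with hPi
      · exact h i hPi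
      · trivial
    · intro h i hPi
      have := h i; rwa [if_pos hPi] at this
  rw [h, Measure.pi_pi]
  have h2 : ∀ i : ι, unif (if P i then Set.Iic c else Set.univ)
      = if P i then unif (Set.Iic c) else 1 := by
    intro i; split_ifs <;> simp
  simp_rw [h2]
  rw [Finset.prod_ite, Finset.prod_const, Finset.prod_const, one_pow, mul_one]

lemma pi_inter_eq_mul {ι : Type*} [Fintype ι] (μ : ι → Measure ℝ)
    [∀ i, IsProbabilityMeasure (μ i)]
    (S : Set ι) (A B : Set (ι → ℝ)) (hA : MeasurableSet A) (hB : MeasurableSet B)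
    (hAS : ∀ x y : ι → ℝ, (∀ i ∈ S, x i = y i) → x ∈ A → y ∈ A)
    (hBS : ∀ x y : ι → ℝ, (∀ i ∉ S, x i = y i) → x ∈ B → y ∈ B) :
    Measure.pi μ (A ∩ B) = Measure.pi μ A * Measure.pi μ B := by
  classical
  set p : ι → Prop := fun i => i ∈ S with hp
  set ψ := MeasurableEquiv.piEquivPiSubtypeProd (fun _ : ι => ℝ) p with hψdef
  have hψ : MeasurePreserving ψ (Measure.pi μ)
      ((Measure.pi fun i : Subtype p => μ i).prod (Measure.pi fun i : {i // ¬ p i} => μ i)) :=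
    measurePreserving_piEquivPiSubtypeProd μ p
  set Φ₁ : (∀ _ : Subtype p, ℝ) → (ι → ℝ) := fun x => ψ.symm (x, fun _ => 0) with hΦ₁
  set Φ₂ : (∀ _ : {i // ¬ p i}, ℝ) → (ι → ℝ) := fun y => ψ.symm (fun _ => 0, y) with hΦ₂
  have hΦ₁m : Measurable Φ₁ := ψ.symm.measurable.comp (measurable_id.prodMk measurable_const)
  have hΦ₂m : Measurable Φ₂ := ψ.symm.measurable.comp (measurable_const.prodMk measurable_id)
  have hsymm : ∀ (u : ∀ _ : Subtype p, ℝ) (v : ∀ _ : {i // ¬ p i}, ℝ) (i : ι),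
      ψ.symm (u, v) i = if h : p i then u ⟨i, h⟩ else v ⟨i, h⟩ := by
    intro u v i; rfl
  have happ : ∀ (z : ι → ℝ), ψ z = (fun i : Subtype p => z i, fun i : {i // ¬ p i} => z i) := by
    intro z; rfl
  have hA' : A = ψ ⁻¹' ((Φ₁ ⁻¹' A) ×ˢ (Set.univ : Set (∀ _ : {i // ¬ p i}, ℝ))) := by
    ext z
    simp only [Set.mem_preimage, Set.mem_prod, Set.mem_univ, and_true, happ]
    constructor
    · intro hz
      refine hAS z _ (fun i hi => ?_) hz
      simp only [hΦ₁, hsymm, dif_pos (show p i from hi)]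
    · intro hz
      refine hAS _ z (fun i hi => ?_) hz
      simp only [hΦ₁, hsymm, dif_pos (show p i from hi)]
  have hB' : B = ψ ⁻¹' ((Set.univ : Set (∀ _ : Subtype p, ℝ)) ×ˢ (Φ₂ ⁻¹' B)) := by
    ext z
    simp only [Set.mem_preimage, Set.mem_prod, Set.mem_univ, true_and, happ]
    constructor
    · intro hz
      refine hBS z _ (fun i hi => ?_) hz
      simp only [hΦ₂, hsymm, dif_neg (show ¬ p i from hi)]
    · intro hz
      refine hBS _ z (fun i hi => ?_) hz
      simp only [hΦ₂, hsymm, dif_neg (show ¬ p i from hi)]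
  have hAB : A ∩ B = ψ ⁻¹' ((Φ₁ ⁻¹' A) ×ˢ (Φ₂ ⁻¹' B)) := by
    conv_lhs => rw [hA', hB']
    rw [← Set.preimage_inter, Set.prod_inter_prod, Set.univ_inter, Set.inter_univ]
  have m12 : Measure.pi μ (A ∩ B) =
      (Measure.pi fun i : Subtype p => μ i) (Φ₁ ⁻¹' A)
        * (Measure.pi fun i : {i // ¬ p i} => μ i) (Φ₂ ⁻¹' B) := by
    conv_lhs => rw [hAB]
    rw [hψ.measure_preimage ((hΦ₁m hA).prod (hΦ₂m hB)).nullMeasurableSet,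
      Measure.prod_prod]
  have m1 : Measure.pi μ A = (Measure.pi fun i : Subtype p => μ i) (Φ₁ ⁻¹' A) := by
    conv_lhs => rw [hA']
    rw [hψ.measure_preimage ((hΦ₁m hA).prod MeasurableSet.univ).nullMeasurableSet,
      Measure.prod_prod, measure_univ, mul_one]
  have m2 : Measure.pi μ B = (Measure.pi fun i : {i // ¬ p i} => μ i) (Φ₂ ⁻¹' B) := by
    conv_lhs => rw [hB']
    rw [hψ.measure_preimage (MeasurableSet.univ.prod (hΦ₂m hB)).nullMeasurableSet,
      Measure.prod_prod, measure_univ, one_mul]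
  rw [m12, m1, m2]

end Indep
section Inner

open Set

variable {n : ℕ}

/-- The box event: all edges inside `σ` (other than `e`) have weight `≤ c`. -/
def BoxE (σ : Finset (Fin n)) (e : EdgeIdx n) (c : ℝ) :
    Set ({E : EdgeIdx n // ¬ E = e} → ℝ) :=
  {y | ∀ E : {E : EdgeIdx n // ¬ E = e}, InS σ E.1 → y E ≤ c}

/-- The event: all edges from `p` to `σ` have weight `≤ c`. -/
def DpE (σ : Finset (Fin n)) (e : EdgeIdx n) (p : Fin n) (c : ℝ) :
    Set ({E : EdgeIdx n // ¬ E = e} → ℝ) :=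
  {y | ∀ E : {E : EdgeIdx n // ¬ E = e}, Tp σ p E.1 → y E ≤ c}

lemma Tp.mem {σ : Finset (Fin n)} {p : Fin n} {E : EdgeIdx n} (h : Tp σ p E) : p ∈ E.1 := by
  obtain ⟨i, _, hE⟩ := h
  rw [hE]; exact Sym2.mem_mk_left p i

lemma Tp.ne {σ : Finset (Fin n)} {p : Fin n} {E e : EdgeIdx n} (h : Tp σ p E)
    (he : e ∈ sE σ) (hp : p ∉ σ) : E ≠ e := by
  rintro rfl
  exact hp (mem_sE.1 he p h.mem)

lemma InS.not_mem {σ : Finset (Fin n)} {p : Fin n} {E : EdgeIdx n} (h : InS σ E)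
    (hp : p ∉ σ) : p ∉ E.1 := fun hmem => hp (h p hmem)

lemma card_box {σ : Finset (Fin n)} {e : EdgeIdx n} (he : e ∈ sE σ)
    [Fintype {E : EdgeIdx n // ¬ E = e}]
    [DecidablePred fun E : {E : EdgeIdx n // ¬ E = e} => InS σ E.1] :
    (Finset.univ.filter fun E : {E : EdgeIdx n // ¬ E = e} => InS σ E.1).card =
      Nat.choose σ.card 2 - 1 := by
  classical
  have h : (Finset.univ.filter fun E : {E : EdgeIdx n // ¬ E = e} => InS σ E.1).card
      = ((sE σ).erase e).card := by
    apply Finset.card_bij (fun E _ => E.1)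
    · intro E hE
      simp only [Finset.mem_filter, Finset.mem_univ, true_and] at hE
      exact Finset.mem_erase.2 ⟨E.2, mem_sE.2 hE⟩
    · intro a _ b _ hab; exact Subtype.ext hab
    · intro E hE
      rw [Finset.mem_erase] at hE
      exact ⟨⟨E, hE.1⟩, by simp [mem_sE.1 hE.2], rfl⟩
  rw [h, Finset.card_erase_of_mem he, card_sE]

lemma card_dp {σ : Finset (Fin n)} {e : EdgeIdx n} (he : e ∈ sE σ) {p : Fin n} (hp : p ∉ σ)
    [Fintype {E : EdgeIdx n // ¬ E = e}]
    [DecidablePred fun E : {E : EdgeIdx n // ¬ E = e} => Tp σ p E.1] :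
    (Finset.univ.filter fun E : {E : EdgeIdx n // ¬ E = e} => Tp σ p E.1).card = σ.card := by
  classical
  symm
  apply Finset.card_bij
    (fun i hi => (⟨eI p i (fun h => hp (h ▸ hi)),
      Tp.ne ⟨i, hi, rfl⟩ he hp⟩ : {E : EdgeIdx n // ¬ E = e}))
  · intro i hi
    simp only [Finset.mem_filter, Finset.mem_univ, true_and]
    exact ⟨i, hi, rfl⟩
  · intro a ha b hb hab
    have := congrArg (fun E : {E : EdgeIdx n // ¬ E = e} => E.1.1) hab
    rcases (by simpa [eI, Sym2.eq_iff] using this : a = b ∨ p = b ∧ a = p) with h | ⟨_, h2⟩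
    · exact h
    · exact absurd (h2 ▸ ha) hp
  · intro E hE
    simp only [Finset.mem_filter, Finset.mem_univ, true_and] at hE
    obtain ⟨i, hi, hEi⟩ := hE
    exact ⟨i, hi, Subtype.ext (Subtype.ext hEi.symm)⟩

lemma factorize {σ : Finset (Fin n)} {e : EdgeIdx n} [Fintype {E : EdgeIdx n // ¬ E = e}] (c : ℝ)
    (Q : Finset (Fin n)) (hQ : ∀ p ∈ Q, p ∉ σ) :
    Measure.pi (fun _ : {E : EdgeIdx n // ¬ E = e} => unif)
        (BoxE σ e c ∩ ⋂ p ∈ Q, (DpE σ e p c)ᶜ) =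
      Measure.pi (fun _ : {E : EdgeIdx n // ¬ E = e} => unif) (BoxE σ e c) *
        ∏ p ∈ Q, Measure.pi (fun _ : {E : EdgeIdx n // ¬ E = e} => unif) ((DpE σ e p c)ᶜ) := by
  classical
  induction Q using Finset.induction_on with
  | empty => simp
  | insert p Q hp ih =>
    have hpσ : p ∉ σ := hQ p (Finset.mem_insert_self p Q)
    have hQ' : ∀ q ∈ Q, q ∉ σ := fun q hq => hQ q (Finset.mem_insert_of_mem hq)
    have hset : BoxE σ e c ∩ ⋂ q ∈ insert p Q, (DpE σ e q c)ᶜ =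
        (DpE σ e p c)ᶜ ∩ (BoxE σ e c ∩ ⋂ q ∈ Q, (DpE σ e q c)ᶜ) := by
      rw [Finset.set_biInter_insert]
      rw [← Set.inter_assoc, Set.inter_comm (BoxE σ e c) ((DpE σ e p c)ᶜ), Set.inter_assoc]
    rw [hset]
    have hfact := pi_inter_eq_mul (fun _ : {E : EdgeIdx n // ¬ E = e} => unif)
      {E : {E : EdgeIdx n // ¬ E = e} | p ∈ E.1.1}
      ((DpE σ e p c)ᶜ) (BoxE σ e c ∩ ⋂ q ∈ Q, (DpE σ e q c)ᶜ)
      (mble_box _ c).compl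
      ((mble_box _ c).inter (MeasurableSet.biInter (Finset.countable_toSet Q)
        fun q _ => (mble_box _ c).compl))
      ?_ ?_
    · rw [hfact, ih hQ', Finset.prod_insert hp]
      ring
    · -- (DpE p)ᶜ depends only on coordinates touching p
      intro x y hxy hx
      simp only [Set.mem_compl_iff, DpE, Set.mem_setOf_eq, not_forall] at hx ⊢
      obtain ⟨E, hT, hle⟩ := hx
      exact ⟨E, hT, by rw [← hxy E hT.mem]; exact hle⟩
    · -- the rest depends only on coordinates not touching p
      intro x y hxy hx
      obtain ⟨hxb, hxq⟩ := hx
      constructor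
      · intro E hE
        rw [← hxy E (InS.not_mem hE hpσ)]
        exact hxb E hE
      · simp only [Set.mem_iInter] at hxq ⊢
        intro q hq
        have hx2 := hxq q hq
        simp only [Set.mem_compl_iff, DpE, Set.mem_setOf_eq, not_forall] at hx2 ⊢
        obtain ⟨E, hT, hle⟩ := hx2
        refine ⟨E, hT, ?_⟩
        have hpE : p ∉ E.1.1 := by
          obtain ⟨i, hi, hEq⟩ := hT
          rw [hEq, Sym2.mem_iff]
          rintro (rfl | rfl)
          · exact hp hq
          · exact hpσ hi
        rw [← hxy E hpE]
        exact hle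
end Inner
section InnerEq

open Set
open scoped ENNReal

variable {n : ℕ}

lemma inner_eq {σ : Finset (Fin n)} {e : EdgeIdx n} [Fintype {E : EdgeIdx n // ¬ E = e}]
    (he : e ∈ sE σ) {c : ℝ}
    (hc0 : 0 ≤ c) (hc1 : c ≤ 1) :
    Measure.pi (fun _ : {E : EdgeIdx n // ¬ E = e} => unif)
        (BoxE σ e c ∩ ⋂ p ∈ σᶜ, (DpE σ e p c)ᶜ) =
      ENNReal.ofReal (c ^ (Nat.choose σ.card 2 - 1) * (1 - c ^ σ.card) ^ (σᶜ.card)) := by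
  classical
  rw [factorize c σᶜ (fun p hp => Finset.mem_compl.1 hp)]
  have hbox : Measure.pi (fun _ : {E : EdgeIdx n // ¬ E = e} => unif) (BoxE σ e c)
      = ENNReal.ofReal c ^ (Nat.choose σ.card 2 - 1) := by
    have h := pi_box (fun E : {E : EdgeIdx n // ¬ E = e} => InS σ E.1) c
    rw [unif_Iic hc0 hc1, card_box he] at h
    exact h
  have hdp : ∀ p ∈ σᶜ, Measure.pi (fun _ : {E : EdgeIdx n // ¬ E = e} => unif)
      ((DpE σ e p c)ᶜ) = 1 - ENNReal.ofReal c ^ σ.card := by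
    intro p hp
    have hp' := Finset.mem_compl.1 hp
    have h := pi_box (fun E : {E : EdgeIdx n // ¬ E = e} => Tp σ p E.1) c
    rw [unif_Iic hc0 hc1, card_dp he hp'] at h
    rw [prob_compl_eq_one_sub (show MeasurableSet (DpE σ e p c) from mble_box _ c)]
    exact congrArg (fun z => 1 - z) h
  rw [hbox, Finset.prod_congr rfl hdp, Finset.prod_const]
  have h2 : (1 : ℝ≥0∞) - (ENNReal.ofReal c) ^ σ.card = ENNReal.ofReal (1 - c ^ σ.card) := by
    rw [ENNReal.ofReal_sub _ (pow_nonneg hc0 _), ENNReal.ofReal_one, ENNReal.ofReal_pow hc0]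
  rw [h2, ← ENNReal.ofReal_pow hc0, ← ENNReal.ofReal_pow
    (sub_nonneg.2 (pow_le_one₀ hc0 hc1)), ← ENNReal.ofReal_mul (by positivity)]

end InnerEq
section Fubini

open Set
open scoped ENNReal

variable {n : ℕ}

/-- The basic event: the weight of `e` lies in `(t,1]`, is maximal among edges inside `σ`,
and every outside vertex has an edge to `σ` heavier than `ω e`. -/
def Bev (t : ℝ) (σ : Finset (Fin n)) (e : EdgeIdx n) : Set (EdgeIdx n → ℝ) :=
  {ω | ω e ∈ Set.Ioc t 1} ∩ ({ω | ∀ E ∈ sE σ, ω E ≤ ω e} ∩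
    {ω | ∀ p, p ∉ σ → ∃ i ∈ σ, ω e < eV ω p i})

lemma mem_Bev {t : ℝ} {σ : Finset (Fin n)} {e : EdgeIdx n} {ω : EdgeIdx n → ℝ} :
    ω ∈ Bev t σ e ↔ ω e ∈ Set.Ioc t 1 ∧ (∀ E ∈ sE σ, ω E ≤ ω e) ∧
      ∀ p, p ∉ σ → ∃ i ∈ σ, ω e < eV ω p i := by
  simp only [Bev, Set.mem_inter_iff, Set.mem_setOf_eq]

lemma eV_measurable (p i : Fin n) : Measurable fun ω : EdgeIdx n → ℝ => eV ω p i := by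
  by_cases h : p = i
  · simp only [eV, dif_pos h]; exact measurable_const
  · simp only [eV, dif_neg h]; exact measurable_pi_apply _

lemma mble_Bev (t : ℝ) (σ : Finset (Fin n)) (e : EdgeIdx n) : MeasurableSet (Bev t σ e) := by
  refine MeasurableSet.inter ?_ (MeasurableSet.inter ?_ ?_)
  · exact (measurable_pi_apply e) measurableSet_Ioc
  · rw [Set.setOf_forall]
    refine MeasurableSet.iInter fun E => ?_
    by_cases hE : E ∈ sE σ
    · simp only [eq_true hE, true_implies]
      exact measurableSet_le (measurable_pi_apply E) (measurable_pi_apply e)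
    · simp [hE]
  · rw [Set.setOf_forall]
    refine MeasurableSet.iInter fun q => ?_
    by_cases hq : q ∉ σ
    · simp only [eq_true hq, true_implies]
      rw [Set.setOf_exists]
      refine MeasurableSet.iUnion fun i => ?_
      by_cases hi : i ∈ σ
      · simp only [eq_true hi, true_and]
        exact measurableSet_lt (measurable_pi_apply e) (eV_measurable q i)
      · simp [hi]
    · simp at hq; simp [hq]

lemma lintegral_pi_unique {α : Type*} {_inst : Fintype α} (a₀ : α) (huniq : ∀ b : α, b = a₀)
    (F : ℝ → ℝ≥0∞) (hF : Measurable F) :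
    ∫⁻ x : α → ℝ, F (x a₀) ∂(Measure.pi fun _ : α => unif) = ∫⁻ s, F s ∂unif := by
  haveI hu : Unique α := ⟨⟨a₀⟩, huniq⟩
  have hpi : (Measure.pi fun _ : α => unif) =
      @Measure.pi α (fun _ => ℝ) Unique.fintype (fun _ => Real.measurableSpace)
        (fun _ => unif) :=
    congrArg (fun i => @Measure.pi α (fun _ => ℝ) i (fun _ => Real.measurableSpace)
      (fun _ => unif)) (Subsingleton.elim _ _)
  rw [hpi]
  have h := (measurePreserving_funUnique unif α).lintegral_comp hF
  have hfun : (fun x : α → ℝ => F (x a₀)) = fun a => F ((MeasurableEquiv.funUnique α ℝ) a) :=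
    funext fun x => congrArg F (congrArg x (huniq _)).symm
  rw [hfun]
  exact h

lemma measure_Bev_le {t : ℝ} {σ : Finset (Fin n)} {e : EdgeIdx n}
    (he : e ∈ sE σ) (ht0 : 0 ≤ t) (ht1 : t ≤ 1) :
    Pn n (Bev t σ e) ≤ ENNReal.ofReal
      (∫ s in t..1, s ^ (Nat.choose σ.card 2 - 1) * (1 - s ^ σ.card) ^ σᶜ.card) := by
  classical
  set g : ℝ → ℝ := fun s => s ^ (Nat.choose σ.card 2 - 1) * (1 - s ^ σ.card) ^ σᶜ.card with hg
  have hgc : Continuous g := by fun_prop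
  set ψ := MeasurableEquiv.piEquivPiSubtypeProd (fun _ : EdgeIdx n => ℝ)
    (fun E : EdgeIdx n => E = e) with hψdef
  have hψ := measurePreserving_piEquivPiSubtypeProd (fun _ : EdgeIdx n => unif)
    (fun E : EdgeIdx n => E = e)
  have hBm := mble_Bev t σ e
  have hSm : MeasurableSet (ψ.symm ⁻¹' Bev t σ e) := ψ.symm.measurable hBm
  have hpre : Bev t σ e = ψ ⁻¹' (ψ.symm ⁻¹' Bev t σ e) := by
    ext ω; simp
  have hindm : Measurable (Set.indicator (Set.Ioc t 1) (fun s => ENNReal.ofReal (g s))) :=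
    (ENNReal.measurable_ofReal.comp hgc.measurable).indicator measurableSet_Ioc
  conv_lhs => rw [show Pn n = Measure.pi fun _ : EdgeIdx n => unif from rfl, hpre]
  rw [hψ.measure_preimage hSm.nullMeasurableSet, Measure.prod_apply hSm]
  refine le_trans (lintegral_mono
    (g := fun x => Set.indicator (Set.Ioc t 1) (fun s => ENNReal.ofReal (g s)) (x ⟨e, rfl⟩))
    (fun x => ?_)) (le_of_eq ?_)
  · -- pointwise slice bound
    dsimp only
    set s := x ⟨e, rfl⟩ with hs
    have hsymm : ∀ (y : {E : EdgeIdx n // ¬ E = e} → ℝ) (E : EdgeIdx n),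
        ψ.symm (x, y) E = if h : E = e then x ⟨E, h⟩ else y ⟨E, h⟩ := fun y E => rfl
    have hze : ∀ y : {E : EdgeIdx n // ¬ E = e} → ℝ, ψ.symm (x, y) e = s := by
      intro y
      rw [hsymm y e, dif_pos rfl]
    by_cases hmem : s ∈ Set.Ioc t 1
    · rw [Set.indicator_of_mem hmem]
      have hs0 : (0:ℝ) ≤ s := ht0.trans hmem.1.le
      have hs1 : s ≤ 1 := hmem.2
      have hsub : Prod.mk x ⁻¹' (ψ.symm ⁻¹' Bev t σ e) ⊆
          BoxE σ e s ∩ ⋂ q ∈ σᶜ, (DpE σ e q s)ᶜ := by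
        intro y hy
        have hyB : ψ.symm (x, y) ∈ Bev t σ e := hy
        rw [mem_Bev] at hyB
        obtain ⟨h1, h2, h3⟩ := hyB
        constructor
        · intro E hIn
          have := h2 E.1 (mem_sE.2 hIn)
          rwa [hze y, hsymm y E.1, dif_neg E.2] at this
        · simp only [Set.mem_iInter]
          intro q hq
          obtain ⟨i, hi, hlt⟩ := h3 q (Finset.mem_compl.1 hq)
          intro hD
          have hqi : q ≠ i := fun h => (Finset.mem_compl.1 hq) (h ▸ hi)
          have hne : ¬ (eI q i hqi) = e := Tp.ne ⟨i, hi, rfl⟩ he (Finset.mem_compl.1 hq)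
          have hDy := hD ⟨eI q i hqi, hne⟩ ⟨i, hi, rfl⟩
          rw [eV_eq _ hqi, hsymm y (eI q i hqi), dif_neg hne, hze y] at hlt
          exact absurd hDy (not_le.2 hlt)
      calc (Measure.pi fun _ : {E : EdgeIdx n // ¬ E = e} => unif)
            (Prod.mk x ⁻¹' (ψ.symm ⁻¹' Bev t σ e))
          ≤ (Measure.pi fun _ : {E : EdgeIdx n // ¬ E = e} => unif)
            (BoxE σ e s ∩ ⋂ q ∈ σᶜ, (DpE σ e q s)ᶜ) := measure_mono hsub
        _ = ENNReal.ofReal (g s) := inner_eq he hs0 hs1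
    · rw [Set.indicator_of_notMem hmem]
      have hempty : Prod.mk x ⁻¹' (ψ.symm ⁻¹' Bev t σ e) = ∅ := by
        ext y
        simp only [Set.mem_preimage, Set.mem_empty_iff_false, iff_false]
        intro hy
        have hyB : ψ.symm (x, y) ∈ Bev t σ e := hy
        rw [mem_Bev] at hyB
        exact hmem (hze y ▸ hyB.1)
      rw [hempty]
      simp
  · -- evaluate the outer integral
    refine Eq.trans (lintegral_pi_unique (⟨e, rfl⟩ : {E : EdgeIdx n // E = e})
      (fun b => Subtype.ext b.2)
      (Set.indicator (Set.Ioc t 1) fun s => ENNReal.ofReal (g s)) hindm) ?_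
    have hnn : 0 ≤ᵐ[volume.restrict (Set.Ioc t 1)] g := by
      refine (ae_restrict_iff' measurableSet_Ioc).2 (Filter.Eventually.of_forall fun z hz => ?_)
      have hz0 : (0:ℝ) ≤ z := ht0.trans hz.1.le
      have hz1 : z ^ σ.card ≤ 1 := pow_le_one₀ hz0 hz.2
      exact mul_nonneg (pow_nonneg hz0 _) (pow_nonneg (by linarith) _)
    rw [lintegral_indicator measurableSet_Ioc]
    rw [show unif = volume.restrict (Set.Icc 0 1) from rfl,
      Measure.restrict_restrict measurableSet_Ioc,
      Set.inter_eq_self_of_subset_left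
        (show Set.Ioc t 1 ⊆ Set.Icc 0 1 from fun z hz => ⟨ht0.trans hz.1.le, hz.2⟩),
      ← ofReal_integral_eq_lintegral_ofReal hgc.integrableOn_Ioc hnn,
      intervalIntegral.integral_of_le ht1]

end Fubini
section Assemble

open Set
open scoped ENNReal

variable {n : ℕ}

/-- The event counted by `NkHat`. -/
def Aev (k : ℕ) (t : ℝ) (σ : Finset (Fin n)) : Set (EdgeIdx n → ℝ) :=
  {ω | σ.card = k + 1 ∧ ¬ IsClique ω t σ ∧ ∃ s, t < s ∧ s ≤ 1 ∧ IsMaxClique k ω s σ}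

lemma Aev_eq {k : ℕ} {t : ℝ} {σ : Finset (Fin n)} (hk : 1 ≤ k) (hcard : σ.card = k + 1) :
    Aev k t σ = ⋃ e ∈ sE σ, Bev t σ e := by
  have hne : (sE σ).Nonempty := by
    obtain ⟨a, ha, b, hb, hab⟩ := Finset.one_lt_card.1 (by omega : 1 < σ.card)
    refine ⟨eI a b hab, mem_sE.2 fun v hv => ?_⟩
    rcases Sym2.mem_iff.1 hv with rfl | rfl
    exacts [ha, hb]
  ext ω
  simp only [Aev, Set.mem_setOf_eq, Set.mem_iUnion]
  constructor
  · rintro ⟨hc, hnc, s, hts, hs1, hmc⟩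
    obtain ⟨e₀, he₀, hsup⟩ := Finset.exists_mem_eq_sup' hne ω
    refine ⟨e₀, he₀, ?_⟩
    rw [mem_Bev]
    have hclique := isClique_iff.1 hmc.2.1
    have hle : ∀ E ∈ sE σ, ω E ≤ ω e₀ := fun E hE => hsup ▸ Finset.le_sup' ω hE
    have h1 : t < ω e₀ := by
      by_contra hle'
      push_neg at hle'
      exact hnc (isClique_iff.2 fun E hE => (hle E hE).trans hle')
    have h2 : ω e₀ ≤ 1 := (hclique e₀ he₀).trans hs1
    refine ⟨⟨h1, h2⟩, hle, fun p hp => ?_⟩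
    obtain ⟨i, hi, hlt⟩ := hmc.2.2 p hp
    exact ⟨i, hi, lt_of_le_of_lt (hclique e₀ he₀) hlt⟩
  · rintro ⟨e, he, hB⟩
    rw [mem_Bev] at hB
    obtain ⟨⟨h1, h2⟩, hle, hout⟩ := hB
    refine ⟨hcard, ?_, ω e, h1, h2, hcard, isClique_iff.2 hle, hout⟩
    intro hcl
    exact absurd (isClique_iff.1 hcl e he) (not_le.2 h1)

lemma mble_Aev {k : ℕ} {t : ℝ} {σ : Finset (Fin n)} (hk : 1 ≤ k) (hcard : σ.card = k + 1) :
    MeasurableSet (Aev k t σ) := by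
  rw [Aev_eq hk hcard]
  exact (sE σ).measurableSet_biUnion fun e _ => mble_Bev t σ e

lemma measure_Aev_le {k : ℕ} (hk : 1 ≤ k) {t : ℝ} (ht0 : 0 ≤ t) (ht1 : t ≤ 1)
    {σ : Finset (Fin n)} (hcard : σ.card = k + 1) :
    Pn n (Aev k t σ) ≤ (Nat.choose (k+1) 2 : ℝ≥0∞) * ENNReal.ofReal
      (∫ s in t..1, s ^ (Nat.choose (k + 1) 2 - 1) * (1 - s ^ (k + 1)) ^ (n - k - 1)) := by
  have hcompl : σᶜ.card = n - k - 1 := by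
    rw [Finset.card_compl, hcard, Fintype.card_fin]; omega
  rw [Aev_eq hk hcard]
  refine le_trans (measure_biUnion_finset_le _ _) ?_
  have hb : ∀ e ∈ sE σ, Pn n (Bev t σ e) ≤ ENNReal.ofReal
      (∫ s in t..1, s ^ (Nat.choose (k + 1) 2 - 1) * (1 - s ^ (k + 1)) ^ (n - k - 1)) := by
    intro e he
    have h := measure_Bev_le he ht0 ht1
    rwa [hcard, hcompl] at h
  refine le_trans (Finset.sum_le_sum hb) ?_
  rw [Finset.sum_const, card_sE, hcard, nsmul_eq_mul]

end Assemble

theorem expectation_NkHat_le' (k n : ℕ) (hk : 1 ≤ k) (hn : k + 1 ≤ n)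
    (t : ℝ) (ht : t ∈ Set.Icc (0 : ℝ) 1) :
    (∫ ω, (NkHat k t ω : ℝ) ∂ Pn n) ≤
      (Nat.choose n (k + 1)) * (Nat.choose (k + 1) 2) *
        ∫ s in t..1, s ^ (Nat.choose (k + 1) 2 - 1) * (1 - s ^ (k + 1)) ^ (n - k - 1) := by
  classical
  obtain ⟨ht0, ht1⟩ := ht
  set I := ∫ s in t..1, s ^ (Nat.choose (k + 1) 2 - 1) * (1 - s ^ (k + 1)) ^ (n - k - 1) with hI
  have hI0 : 0 ≤ I := by
    apply intervalIntegral.integral_nonneg ht1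
    intro z hz
    have hz0 : (0:ℝ) ≤ z := le_trans ht0 hz.1
    have hz1 : z ^ (k+1) ≤ 1 := pow_le_one₀ hz0 hz.2
    exact mul_nonneg (pow_nonneg hz0 _) (pow_nonneg (by linarith) _)
  have hNk : ∀ ω : EdgeIdx n → ℝ, (NkHat k t ω : ℝ) =
      ∑ σ ∈ Finset.powersetCard (k+1) (Finset.univ : Finset (Fin n)),
        Set.indicator (Aev k t σ) (fun _ => (1:ℝ)) ω := by
    intro ω
    rw [NkHat, Nat.card_eq_fintype_card, Fintype.card_subtype]
    have hfilter : (Finset.univ.filter fun σ : Finset (Fin n) =>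
        σ.card = k + 1 ∧ ¬ IsClique ω t σ ∧ ∃ s, t < s ∧ s ≤ 1 ∧ IsMaxClique k ω s σ)
        = (Finset.powersetCard (k+1) Finset.univ).filter (fun σ => ω ∈ Aev k t σ) := by
      ext σ
      simp only [Finset.mem_filter, Finset.mem_univ, true_and,
        Finset.mem_powersetCard_univ]
      constructor
      · intro h; exact ⟨h.1, h⟩
      · intro h; exact h.2
    rw [hfilter, Finset.card_filter]
    push_cast
    refine Finset.sum_congr rfl fun σ _ => ?_
    rw [Set.indicator_apply]
  simp only [hNk]
  have hint : ∀ σ ∈ Finset.powersetCard (k+1) (Finset.univ : Finset (Fin n)),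
      Integrable (Set.indicator (Aev k t σ) (fun _ => (1:ℝ))) (Pn n) := by
    intro σ hσ
    have hcard := Finset.mem_powersetCard_univ.1 hσ
    exact (integrable_indicator_iff (mble_Aev hk hcard)).2
      (integrableOn_const (measure_lt_top _ _).ne)
  rw [integral_finset_sum _ hint]
  have hbound : ∀ σ ∈ Finset.powersetCard (k+1) (Finset.univ : Finset (Fin n)),
      (∫ ω, Set.indicator (Aev k t σ) (fun _ => (1:ℝ)) ω ∂ Pn n) ≤
        (Nat.choose (k+1) 2 : ℝ) * I := by
    intro σ hσ
    have hcard := Finset.mem_powersetCard_univ.1 hσ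
    rw [integral_indicator_const (1:ℝ) (mble_Aev hk hcard), smul_eq_mul, mul_one]
    have hA := measure_Aev_le hk ht0 ht1 hcard
    have hA' : Pn n (Aev k t σ) ≤ ENNReal.ofReal ((Nat.choose (k+1) 2 : ℝ) * I) := by
      rw [ENNReal.ofReal_mul (by positivity), ENNReal.ofReal_natCast]
      exact hA
    exact ENNReal.toReal_le_of_le_ofReal (by positivity) hA'
  refine le_trans (Finset.sum_le_sum hbound) ?_
  rw [Finset.sum_const, Finset.card_powersetCard, Finset.card_univ, Fintype.card_fin,
    nsmul_eq_mul, ← mul_assoc]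

/-- `E[N̂_k(t)] ≤ C(n,k+1)·C(k+1,2)·∫_t^1 s^(C(k+1,2)−1)(1−s^{k+1})^{n−k−1} ds`. -/
theorem expectation_NkHat_le (k n : ℕ) (hk : 1 ≤ k) (hn : k + 1 ≤ n)
    (t : ℝ) (ht : t ∈ Set.Icc (0 : ℝ) 1) :
    (∫ ω, (NkHat k t ω : ℝ) ∂ Pn n) ≤
      (Nat.choose n (k + 1)) * (Nat.choose (k + 1) 2) *
        ∫ s in t..1, s ^ (Nat.choose (k + 1) 2 - 1) * (1 - s ^ (k + 1)) ^ (n - k - 1) :=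
  expectation_NkHat_le' k n hk hn t ht
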